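/- Let DG = (V, E) and DG' = (V', E') be two dynamic graphs with node features X and X'. Let l be a node labeling function satisfying, for all u ∈ V and v ∈ V', l(u) = l(v) if and only if X_u = X'_v. Run the 1-DWL test on both graphs initialized with l (with an injective hash), and run the same DyGNN (same AGG, UPDATE, σ and node features X, X') on both graphs. Then for every time t, every iteration j ≥ 0, every u ∈ V and every v ∈ V': if the 1-DWL colors satisfy c^{(j)}_t(u) = c^{(j)}_t(v), then the DyGNN embeddings satisfy h^{(j)}_t(u) = h^{(j)}_t(v). In particular, the expressive power of any such DyGNN is upper bounded by the 1-DWL test. -/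

import Mathlib

/-- Historical interaction sequence `A^{<t}_{u,v}`: the sorted list of all
timestamps `t' < t` with `(u,v,t') ∈ E` or `(v,u,t') ∈ E`. -/
noncomputable def hist {V : Type} [DecidableEq V] (E : Multiset (V × V × ℝ)) (t : ℝ)
    (u v : V) : List ℝ :=
  ((E.filter fun e => ((e.1 = u ∧ e.2.1 = v) ∨ (e.1 = v ∧ e.2.1 = u)) ∧ e.2.2 < t).map
    fun e => e.2.2).sort (· ≤ ·)

/-- Historical neighborhood `N(u,t)`: the multiset of pairs `(w, t')` with `t' < t`
and `(u,w,t') ∈ E` or `(w,u,t') ∈ E` (with multiplicity). -/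
noncomputable def nbhd {V : Type} [DecidableEq V] (E : Multiset (V × V × ℝ)) (t : ℝ)
    (u : V) : Multiset (V × ℝ) :=
  (E.filter fun e => (e.1 = u ∨ e.2.1 = u) ∧ e.2.2 < t).map
    fun e => if e.1 = u then (e.2.1, e.2.2) else (e.1, e.2.2)

/-- 1-DWL colors at time `t`: `c⁰ = l` and
`c^{j+1}(u) = HASH (c^j(u), {{ (c^j(v), A^{<t}_{u,v}) : (v,t') ∈ N(u,t) }})`. -/
noncomputable def dwl1 {V : Type} [DecidableEq V] {C : Type}
    (E : Multiset (V × V × ℝ)) (t : ℝ) (l : V → C)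
    (hash : C × Multiset (C × List ℝ) → C) : ℕ → V → C
  | 0 => l
  | j + 1 => fun u =>
      hash (dwl1 E t l hash j u,
        (nbhd E t u).map fun p => (dwl1 E t l hash j p.1, hist E t u p.1))

/-- Message-passing DyGNN temporal node embeddings at time `t`:
`h⁰(u) = X_u` and
`h^{l+1}(u) = UPDATE (h^l(u), AGG {{ (h^l(w), σ(t - t')) : (w,t') ∈ N(u,t) }})`. -/
noncomputable def dygnn {V : Type} [DecidableEq V] {dN dT dA : ℕ}
    (E : Multiset (V × V × ℝ)) (t : ℝ) (X : V → Fin dN → ℝ)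
    (σ : ℝ → Fin dT → ℝ)
    (AGG : Multiset ((Fin dN → ℝ) × (Fin dT → ℝ)) → Fin dA → ℝ)
    (UPDATE : (Fin dN → ℝ) × (Fin dA → ℝ) → Fin dN → ℝ) : ℕ → V → Fin dN → ℝ
  | 0 => X
  | l + 1 => fun u =>
      UPDATE (dygnn E t X σ AGG UPDATE l u,
        AGG ((nbhd E t u).map fun p => (dygnn E t X σ AGG UPDATE l p.1, σ (t - p.2))))

lemma nbhd_filter_fst {V : Type} [DecidableEq V] (E : Multiset (V × V × ℝ)) (t : ℝ) (u w : V) :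
    ((nbhd E t u).filter (fun p => p.1 = w)).map Prod.snd
      = ((hist E t u w : List ℝ) : Multiset ℝ) := by
  unfold nbhd hist
  rw [Multiset.sort_eq, Multiset.filter_map, Multiset.map_map, Multiset.filter_filter]
  rw [Multiset.filter_congr (q := fun e : V × V × ℝ =>
      ((e.1 = u ∧ e.2.1 = w) ∨ (e.1 = w ∧ e.2.1 = u)) ∧ e.2.2 < t) ?_]
  · refine Multiset.map_congr rfl ?_
    intro e _
    simp only [Function.comp]
    split_ifs <;> rfl
  · rintro ⟨a, b, s⟩ _
    by_cases h : a = u <;> simp [h, Function.comp] <;> aesop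

lemma mem_nbhd_snd_mem {V : Type} [DecidableEq V] {E : Multiset (V × V × ℝ)} {t : ℝ}
    {u : V} {p : V × ℝ} (hp : p ∈ nbhd E t u) : p.2 ∈ hist E t u p.1 := by
  unfold nbhd at hp
  rw [Multiset.mem_map] at hp
  obtain ⟨e, he, rfl⟩ := hp
  rw [Multiset.mem_filter] at he
  unfold hist
  rw [Multiset.mem_sort, Multiset.mem_map]
  by_cases h : e.1 = u
  · exact ⟨e, Multiset.mem_filter.2 ⟨he.1, Or.inl ⟨h, by simp [h]⟩, he.2.2⟩, by simp [h]⟩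
  · have hb : e.2.1 = u := he.2.1.resolve_left h
    exact ⟨e, Multiset.mem_filter.2 ⟨he.1, Or.inr ⟨by simp [h], hb⟩, he.2.2⟩, by simp [h]⟩

lemma multiset_fst_decomp {α β : Type*} [DecidableEq α] [DecidableEq β]
    (S : Multiset (α × β)) :
    S = ∑ w ∈ (S.map Prod.fst).toFinset, S.filter (fun p => p.1 = w) := by
  ext x
  rw [Multiset.count_sum']
  by_cases hx : x ∈ S
  · rw [Finset.sum_eq_single x.1]
    · simp [Multiset.count_filter]
    · intro b _ hb
      rw [Multiset.count_filter, if_neg (fun h => hb h.symm)]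
    · intro h
      exact absurd (Multiset.mem_toFinset.2 (Multiset.mem_map_of_mem _ hx)) h
  · rw [Multiset.count_eq_zero_of_notMem hx]
    symm
    refine Finset.sum_eq_zero fun w _ => ?_
    simp [Multiset.count_filter, Multiset.count_eq_zero_of_notMem hx]

lemma count_key {V : Type} [DecidableEq V] {C : Type} [DecidableEq C]
    (E : Multiset (V × V × ℝ)) (t : ℝ) (u : V) (c : V → C)
    (c₀ : C) (L : List ℝ) (s : ℝ) :
    L.length * Multiset.count ((c₀, L), s)
        ((nbhd E t u).map (fun p => ((c p.1, hist E t u p.1), p.2)))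
      = L.count s * Multiset.count (c₀, L)
        ((nbhd E t u).map (fun p => (c p.1, hist E t u p.1))) := by
  classical
  conv_lhs => rw [multiset_fst_decomp (nbhd E t u)]
  conv_rhs => rw [multiset_fst_decomp (nbhd E t u)]
  have map_sum' : ∀ {α β : Type} (f : α → β) (T : Finset V) (g : V → Multiset α),
      Multiset.map f (∑ w ∈ T, g w) = ∑ w ∈ T, Multiset.map f (g w) :=
    fun f T g => map_sum (Multiset.mapAddMonoidHom f) g T
  rw [map_sum', map_sum']
  rw [Multiset.count_sum', Multiset.count_sum', Finset.mul_sum, Finset.mul_sum]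
  refine Finset.sum_congr rfl fun w _ => ?_
  have hg : ((nbhd E t u).filter (fun p => p.1 = w)).map
        (fun p => ((c p.1, hist E t u p.1), p.2))
      = (((hist E t u w : List ℝ) : Multiset ℝ)).map
        (fun r => ((c w, hist E t u w), r)) := by
    rw [← nbhd_filter_fst, Multiset.map_map]
    refine Multiset.map_congr rfl fun p hp => ?_
    have : p.1 = w := (Multiset.mem_filter.1 hp).2
    simp [Function.comp, this]
  have hf : ((nbhd E t u).filter (fun p => p.1 = w)).map
        (fun p => (c p.1, hist E t u p.1))
      = Multiset.replicate (hist E t u w).length (c w, hist E t u w) := by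
    have : ((nbhd E t u).filter (fun p => p.1 = w)).map
          (fun p => (c p.1, hist E t u p.1))
        = ((nbhd E t u).filter (fun p => p.1 = w)).map
          (fun _ => (c w, hist E t u w)) := by
      refine Multiset.map_congr rfl fun p hp => ?_
      have : p.1 = w := (Multiset.mem_filter.1 hp).2
      simp [this]
    rw [this, Multiset.map_const']
    congr 1
    have := congrArg Multiset.card (nbhd_filter_fst E t u w)
    simpa using this
  rw [hg, hf, Multiset.count_replicate]
  by_cases hcw : (c w, hist E t u w) = (c₀, L)
  · have hc1 : c w = c₀ := (Prod.mk.injEq _ _ _ _ ▸ hcw).1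
    have hc2 : hist E t u w = L := (Prod.mk.injEq _ _ _ _ ▸ hcw).2
    have hinj : Function.Injective (fun r : ℝ => ((c w, hist E t u w), r)) := by
      intro a b hab
      simpa using congrArg (fun x => x.2) hab
    have : ((c₀, L), s) = (fun r : ℝ => ((c w, hist E t u w), r)) s := by
      simp [hc1, hc2]
    rw [this, Multiset.count_map_eq_count' _ _ hinj, if_pos hcw]
    simp [hc2, mul_comm]
  · rw [if_neg hcw, mul_zero]
    convert mul_zero _
    rw [Multiset.count_eq_zero]
    intro hmem
    obtain ⟨r, _, hr⟩ := Multiset.mem_map.1 hmem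
    exact hcw (congrArg Prod.fst hr)

lemma mg_eq {V V' : Type} [DecidableEq V] [DecidableEq V'] {C : Type} [DecidableEq C]
    (E : Multiset (V × V × ℝ)) (E' : Multiset (V' × V' × ℝ)) (t : ℝ)
    (u : V) (v : V') (c : V → C) (c' : V' → C)
    (hMf : (nbhd E t u).map (fun p => (c p.1, hist E t u p.1))
         = (nbhd E' t v).map (fun p => (c' p.1, hist E' t v p.1))) :
    (nbhd E t u).map (fun p => ((c p.1, hist E t u p.1), p.2))
      = (nbhd E' t v).map (fun p => ((c' p.1, hist E' t v p.1), p.2)) := by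
  classical
  rw [Multiset.ext]
  rintro ⟨⟨c₀, L⟩, s⟩
  by_cases hL : L = []
  · subst hL
    have z : ∀ {W : Type} [inst : DecidableEq W] (F : Multiset (W × W × ℝ)) (x : W)
        (d : W → C), Multiset.count ((c₀, ([] : List ℝ)), s)
          ((nbhd F t x).map (fun p => ((d p.1, hist F t x p.1), p.2))) = 0 := by
      intro W _ F x d
      rw [Multiset.count_eq_zero]
      intro hmem
      obtain ⟨p, hp, hpe⟩ := Multiset.mem_map.1 hmem
      have h1 : hist F t x p.1 = [] := (congrArg (fun y => y.1.2) hpe)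
      have h2 : p.2 ∈ hist F t x p.1 := mem_nbhd_snd_mem hp
      rw [h1] at h2
      exact List.not_mem_nil h2
    rw [z, z]
  · have hpos : 0 < L.length := List.length_pos_iff.2 hL
    refine Nat.eq_of_mul_eq_mul_left hpos ?_
    rw [count_key E t u c c₀ L s, count_key E' t v c' c₀ L s, hMf]

/-- Proposition 2: the expressive power of any message-passing
DyGNN is upper bounded by the 1-DWL test. Given two dynamic graphs with node
features `X`, `X'` and a node labeling `l`/`l'` with `l u = l' v ↔ X_u = X'_v`,
run the 1-DWL test with an injective hash and the same DyGNN on both graphs;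
then equal 1-DWL colors at time `t` and iteration `j` imply equal DyGNN
embeddings at time `t` and layer `j`. -/
theorem dygnn_bounded_by_dwl1 {V V' : Type} [DecidableEq V] [DecidableEq V']
    {C : Type} {dN dT dA : ℕ}
    (E : Multiset (V × V × ℝ)) (E' : Multiset (V' × V' × ℝ))
    (X : V → Fin dN → ℝ) (X' : V' → Fin dN → ℝ)
    (l : V → C) (l' : V' → C)
    (hl : ∀ (u : V) (v : V'), l u = l' v ↔ X u = X' v)
    (hash : C × Multiset (C × List ℝ) → C) (hash_inj : Function.Injective hash)
    (σ : ℝ → Fin dT → ℝ)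
    (AGG : Multiset ((Fin dN → ℝ) × (Fin dT → ℝ)) → Fin dA → ℝ)
    (UPDATE : (Fin dN → ℝ) × (Fin dA → ℝ) → Fin dN → ℝ) :
    ∀ (t : ℝ) (j : ℕ) (u : V) (v : V'),
      dwl1 E t l hash j u = dwl1 E' t l' hash j v →
      dygnn E t X σ AGG UPDATE j u = dygnn E' t X' σ AGG UPDATE j v := by
  classical
  intro t j
  induction j with
  | zero =>
    intro u v h
    exact (hl u v).1 h
  | succ j ih =>
    intro u v h
    simp only [dwl1] at h
    have h2 := hash_inj h
    rw [Prod.mk.injEq] at h2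
    obtain ⟨hc, hM⟩ := h2
    have hMg := mg_eq E E' t u v (dwl1 E t l hash j) (dwl1 E' t l' hash j) hM
    simp only [dygnn]
    have hAGG :
        (nbhd E t u).map (fun p => (dygnn E t X σ AGG UPDATE j p.1, σ (t - p.2)))
          = (nbhd E' t v).map
              (fun p => (dygnn E' t X' σ AGG UPDATE j p.1, σ (t - p.2))) := by
      set k : (C × List ℝ) × ℝ → (Fin dN → ℝ) × (Fin dT → ℝ) := fun x =>
        (if hx : ∃ w : V', dwl1 E' t l' hash j w = x.1.1
          then dygnn E' t X' σ AGG UPDATE j hx.choose else fun _ => 0,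
         σ (t - x.2)) with hk
      have key1 : ∀ p ∈ nbhd E t u,
          (dygnn E t X σ AGG UPDATE j p.1, σ (t - p.2))
            = k ((dwl1 E t l hash j p.1, hist E t u p.1), p.2) := by
        intro p hp
        have hmem : (dwl1 E t l hash j p.1, hist E t u p.1)
            ∈ (nbhd E' t v).map
                (fun q => (dwl1 E' t l' hash j q.1, hist E' t v q.1)) := by
          rw [← hM]
          exact Multiset.mem_map_of_mem _ hp
        obtain ⟨q, hq, hqe⟩ := Multiset.mem_map.1 hmem
        have hex : ∃ w : V', dwl1 E' t l' hash j w = dwl1 E t l hash j p.1 :=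
          ⟨q.1, congrArg Prod.fst hqe⟩
        rw [hk]
        simp only [dif_pos hex]
        have hspec := hex.choose_spec
        have := ih p.1 hex.choose hspec.symm
        rw [Prod.mk.injEq]
        exact ⟨this, rfl⟩
      have key2 : ∀ q ∈ nbhd E' t v,
          (dygnn E' t X' σ AGG UPDATE j q.1, σ (t - q.2))
            = k ((dwl1 E' t l' hash j q.1, hist E' t v q.1), q.2) := by
        intro q hq
        have hex : ∃ w : V', dwl1 E' t l' hash j w = dwl1 E' t l' hash j q.1 :=
          ⟨q.1, rfl⟩
        have hmem : (dwl1 E' t l' hash j q.1, hist E' t v q.1)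
            ∈ (nbhd E t u).map
                (fun p => (dwl1 E t l hash j p.1, hist E t u p.1)) := by
          rw [hM]
          exact Multiset.mem_map_of_mem _ hq
        obtain ⟨p, hp, hpe⟩ := Multiset.mem_map.1 hmem
        have hpc : dwl1 E t l hash j p.1 = dwl1 E' t l' hash j q.1 :=
          congrArg Prod.fst hpe
        rw [hk]
        simp only [dif_pos hex]
        have hspec := hex.choose_spec
        have e1 := ih p.1 hex.choose (hpc.trans hspec.symm)
        have e2 := ih p.1 q.1 hpc
        rw [Prod.mk.injEq]
        exact ⟨e2.symm.trans e1, rfl⟩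
      calc (nbhd E t u).map (fun p => (dygnn E t X σ AGG UPDATE j p.1, σ (t - p.2)))
          = ((nbhd E t u).map
              (fun p => ((dwl1 E t l hash j p.1, hist E t u p.1), p.2))).map k := by
            rw [Multiset.map_map]
            exact Multiset.map_congr rfl key1
        _ = ((nbhd E' t v).map
              (fun q => ((dwl1 E' t l' hash j q.1, hist E' t v q.1), q.2))).map k := by
            rw [hMg]
        _ = (nbhd E' t v).map
              (fun q => (dygnn E' t X' σ AGG UPDATE j q.1, σ (t - q.2))) := by
            rw [Multiset.map_map]
            exact (Multiset.map_congr rfl key2).symm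
    rw [ih u v hc, hAGG]
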